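/- Let d ≥ 1 and μ > 0. Then the sum over p ∈ ℕ₀^d of min(π²|p|² − μ, 0) is bounded below by −L_d^cl μ^(1+d/2) − C ∑_{k=0}^{d−1} μ^(1+k/2), where C depends only on d and L_k^cl are the semiclassical constants. -/

import Mathlib

open MeasureTheory

/-- Volume of the unit ball in `ℝ^k`. -/
noncomputable def unitBallVol (k : ℕ) : ℝ :=
  (volume (Metric.ball (0 : EuclideanSpace ℝ (Fin k)) 1)).toReal

/-- The semiclassical kinetic-energy constant `K_k^cl` (spin number `q = 1`). -/
noncomputable def Kcl (k : ℕ) : ℝ :=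
  ((k : ℝ) / (k + 2)) * (4 * Real.pi ^ 2) / (unitBallVol k) ^ ((2 : ℝ) / k)

/-- The semiclassical eigenvalue-sum constant `L_k^cl`. -/
noncomputable def Lcl (k : ℕ) : ℝ :=
  (1 + (k : ℝ) / 2)⁻¹ * ((1 + (2 : ℝ) / k) * Kcl k) ^ (-(k : ℝ) / 2)

open Real Set intervalIntegral

lemma contAux {r : ℝ} (hr : 0 ≤ r) : Continuous fun x : ℝ => (max x 0) ^ r :=
  (continuous_id.max continuous_const).rpow_const fun _ => Or.inr hr

lemma rpow_succ_base_nonneg {u q : ℝ} (hu : 0 ≤ u) (hq : 0 < q) :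
    u * u ^ (q - 1) = u ^ q := by
  rcases eq_or_lt_of_le hu with h | h
  · rw [← h, Real.zero_rpow (ne_of_gt hq), zero_mul]
  · rw [show q = 1 + (q - 1) by ring, Real.rpow_add h, Real.rpow_one]
    ring_nf

lemma Jrec (q : ℝ) (hq : 1 < q) :
    ∫ s in (0:ℝ)..1, (max (1 - s^2) 0) ^ q
      = (2*q/(2*q+1)) * ∫ s in (0:ℝ)..1, (max (1 - s^2) 0) ^ (q-1) := by
  have hq0 : (0:ℝ) < q := by linarith
  have hq1 : (0:ℝ) ≤ q - 1 := by linarith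
  set G' : ℝ → ℝ := fun s => (max (1 - s^2) 0) ^ q - 2*q*(s^2 * (max (1 - s^2) 0) ^ (q-1))
    with hG'
  have contq : Continuous fun s : ℝ => (max (1 - s^2) 0) ^ q :=
    (contAux hq0.le).comp (by continuity)
  have contq1 : Continuous fun s : ℝ => (max (1 - s^2) 0) ^ (q-1) :=
    (contAux hq1).comp (by continuity)
  have contG' : Continuous G' := by
    apply contq.sub (continuous_const.mul ((continuous_pow 2).mul contq1))
  set F : ℝ → ℝ := fun s => s * (max (1 - s^2) 0) ^ q with hF
  have hderiv : ∀ x ∈ Ioo (0:ℝ) 1, HasDerivWithinAt F (G' x) (Ioi x) x := by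
    intro x hx
    have hgx : 0 < 1 - x^2 := by nlinarith [hx.1, hx.2]
    have h1 : HasDerivAt (fun s : ℝ => 1 - s^2) (-(2*x^1)) x :=
      (hasDerivAt_pow 2 x).const_sub 1
    have h2 : HasDerivAt (fun s : ℝ => (1 - s^2) ^ q)
        (q * (1 - x^2) ^ (q-1) * (-(2*x^1))) x :=
      by have h := (Real.hasDerivAt_rpow_const (x := 1 - x^2) (p := q) (Or.inl (ne_of_gt hgx))).comp x h1; exact h
    have h3 : HasDerivAt (fun s : ℝ => s * (1 - s^2) ^ q)
        (1 * (1 - x^2) ^ q + x * (q * (1 - x^2) ^ (q-1) * (-(2*x^1)))) x :=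
      (hasDerivAt_id x).mul h2
    have hopen : IsOpen {s : ℝ | 0 < 1 - s^2} :=
      isOpen_lt continuous_const (by continuity)
    have heq : F =ᶠ[nhds x] fun s : ℝ => s * (1 - s^2) ^ q :=
      Filter.eventuallyEq_of_mem (hopen.mem_nhds hgx)
        (fun s hs => by simp only [hF, max_eq_left (le_of_lt (show (0:ℝ) < 1 - s^2 from hs))])
    have h4 : HasDerivAt F (1 * (1 - x^2) ^ q + x * (q * (1 - x^2) ^ (q-1) * (-(2*x^1)))) x :=
      h3.congr_of_eventuallyEq heq
    have : G' x = 1 * (1 - x^2) ^ q + x * (q * (1 - x^2) ^ (q-1) * (-(2*x^1))) := by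
      rw [hG']; simp only [max_eq_left hgx.le]; ring
    rw [this]
    exact h4.hasDerivWithinAt
  have hFcont : ContinuousOn F (Icc 0 1) :=
    (continuous_id.mul contq).continuousOn
  have key : ∫ y in (0:ℝ)..1, G' y = F 1 - F 0 :=
    integral_eq_sub_of_hasDeriv_right_of_le zero_le_one hFcont hderiv
      (contG'.intervalIntegrable 0 1)
  have hF1 : F 1 = 0 := by
    simp [hF, Real.zero_rpow (ne_of_gt hq0)]
  have hF0 : F 0 = 0 := by simp [hF]
  rw [hF1, hF0, sub_zero] at key
  -- split the integral
  have hsplit : ∫ y in (0:ℝ)..1, G' y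
      = (∫ s in (0:ℝ)..1, (max (1 - s^2) 0) ^ q)
        - 2*q * ∫ s in (0:ℝ)..1, s^2 * (max (1 - s^2) 0) ^ (q-1) := by
    rw [hG']
    rw [integral_sub (g := fun s => 2*q*(s^2 * (max (1 - s^2) 0) ^ (q-1))) (contq.intervalIntegrable 0 1)
      ((continuous_const.mul ((continuous_pow 2).mul contq1)).intervalIntegrable 0 1),
      intervalIntegral.integral_const_mul]
  have hinner : ∫ s in (0:ℝ)..1, s^2 * (max (1 - s^2) 0) ^ (q-1)
      = (∫ s in (0:ℝ)..1, (max (1 - s^2) 0) ^ (q-1))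
        - ∫ s in (0:ℝ)..1, (max (1 - s^2) 0) ^ q := by
    rw [← integral_sub (contq1.intervalIntegrable 0 1) (contq.intervalIntegrable 0 1)]
    apply integral_congr
    intro s hs
    rw [uIcc_of_le zero_le_one] at hs
    have hg : (0:ℝ) ≤ 1 - s^2 := by nlinarith [hs.1, hs.2]
    have hs2 : s^2 = 1 - (1 - s^2) := by ring
    beta_reduce
    rw [max_eq_left hg]
    linear_combination -(rpow_succ_base_nonneg hg hq0)
  rw [hsplit, hinner] at key
  have h2q : (2*q+1) ≠ 0 := by linarith
  field_simp
  linarith [key]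

noncomputable def J (k : ℕ) : ℝ := ∫ s in (0:ℝ)..1, (max (1 - s^2) 0) ^ ((k:ℝ)/2)

lemma J_zero : J 0 = 1 := by
  simp [J]

lemma J_two : J 2 = 2/3 := by
  have : J 2 = ∫ s in (0:ℝ)..1, (1 - s^2) := by
    rw [J]
    apply intervalIntegral.integral_congr
    intro s hs
    rw [uIcc_of_le zero_le_one] at hs
    have hg : (0:ℝ) ≤ 1 - s^2 := by nlinarith [hs.1, hs.2]
    beta_reduce
    rw [max_eq_left hg]
    norm_num
  rw [this]
  simp [intervalIntegral.integral_sub intervalIntegrable_const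
    (intervalIntegral.intervalIntegrable_pow 2), integral_pow]
  norm_num

lemma J_one : J 1 = π/4 := by
  have hcont : Continuous fun x : ℝ => √(1 - x^2) :=
    Real.continuous_sqrt.comp (by continuity)
  have hsym : ∫ x in (-1:ℝ)..0, √(1-x^2) = ∫ x in (0:ℝ)..1, √(1-x^2) := by
    have h := intervalIntegral.integral_comp_neg (a := (0:ℝ)) (b := 1)
      (fun x => √(1-x^2))
    simp only [neg_zero, neg_sq] at h
    rw [← h]
  have hadd := intervalIntegral.integral_add_adjacent_intervals (μ := volume)
    (hcont.intervalIntegrable (-1:ℝ) 0) (hcont.intervalIntegrable 0 1)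
  rw [integral_sqrt_one_sub_sq, hsym] at hadd
  have hhalf : ∫ x in (0:ℝ)..1, √(1-x^2) = π/4 := by linarith
  rw [J, ← hhalf]
  apply intervalIntegral.integral_congr
  intro s hs
  rw [uIcc_of_le zero_le_one] at hs
  have hg : (0:ℝ) ≤ 1 - s^2 := by nlinarith [hs.1, hs.2]
  beta_reduce
  rw [max_eq_left hg, Real.sqrt_eq_rpow]
  norm_num

lemma J_step (k : ℕ) (hk : 1 ≤ k) : J (k+2) = (((k:ℝ)+2)/((k:ℝ)+3)) * J k := by
  have hk1 : (1:ℝ) ≤ (k:ℝ) := by exact_mod_cast hk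
  have hq : (1:ℝ) < ((k+2:ℕ):ℝ)/2 := by push_cast; linarith
  have h := Jrec (((k+2:ℕ):ℝ)/2) hq
  have e1 : ((k+2:ℕ):ℝ)/2 - 1 = (k:ℝ)/2 := by push_cast; ring
  have e2 : 2*(((k+2:ℕ):ℝ)/2)/(2*(((k+2:ℕ):ℝ)/2)+1) = ((k:ℝ)+2)/((k:ℝ)+3) := by
    have h3 : (0:ℝ) < (k:ℝ)+3 := by positivity
    push_cast
    rw [show 2*(((k:ℝ)+2)/2) = (k:ℝ)+2 by ring]
    congr 1
    ring
  rw [J, J, h, e1, e2]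

lemma Gamma_three_half : Real.Gamma (3/2 : ℝ) = √π/2 := by
  rw [show (3/2 : ℝ) = 1/2 + 1 by norm_num, Real.Gamma_add_one (by norm_num),
    Real.Gamma_one_half_eq]
  ring

lemma J_closed : ∀ k : ℕ, J k = √π * Real.Gamma ((k:ℝ)/2 + 1) /
    (2 * Real.Gamma ((k:ℝ)/2 + 3/2)) := by
  have hsq : (0:ℝ) < √π := Real.sqrt_pos.2 Real.pi_pos
  have hpi : (0:ℝ) < π := Real.pi_pos
  have base0 : J 0 = √π * Real.Gamma (((0:ℕ):ℝ)/2 + 1) / (2 * Real.Gamma (((0:ℕ):ℝ)/2 + 3/2)) := by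
    rw [J_zero]
    norm_num [Real.Gamma_one, Gamma_three_half]
    field_simp
  have base1 : J 1 = √π * Real.Gamma (((1:ℕ):ℝ)/2 + 1) / (2 * Real.Gamma (((1:ℕ):ℝ)/2 + 3/2)) := by
    rw [J_one]
    have h32 : Real.Gamma ((1:ℝ)/2 + 1) = √π/2 := by
      rw [show (1:ℝ)/2 + 1 = 3/2 by norm_num]; exact Gamma_three_half
    have h2 : Real.Gamma ((1:ℝ)/2 + 3/2) = 1 := by
      rw [show (1:ℝ)/2 + 3/2 = 2 by norm_num, Real.Gamma_two]
    push_cast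
    rw [h32, h2, show √π * (√π/2) = (√π*√π)/2 by ring, Real.mul_self_sqrt hpi.le]
    ring
  have base2 : J 2 = √π * Real.Gamma (((2:ℕ):ℝ)/2 + 1) / (2 * Real.Gamma (((2:ℕ):ℝ)/2 + 3/2)) := by
    rw [J_two]
    have h1 : Real.Gamma (((2:ℕ):ℝ)/2 + 1) = 1 := by
      norm_num [Real.Gamma_two]
    have h2 : Real.Gamma (((2:ℕ):ℝ)/2 + 3/2) = (3/4) * √π := by
      rw [show ((2:ℕ):ℝ)/2 + 3/2 = 3/2 + 1 by norm_num, Real.Gamma_add_one (by norm_num),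
        Gamma_three_half]
      ring
    rw [h1, h2]
    field_simp
    ring
  have step : ∀ k : ℕ, 1 ≤ k →
      J k = √π * Real.Gamma ((k:ℝ)/2 + 1) / (2 * Real.Gamma ((k:ℝ)/2 + 3/2)) →
      J (k+2) = √π * Real.Gamma (((k+2:ℕ):ℝ)/2 + 1) / (2 * Real.Gamma (((k+2:ℕ):ℝ)/2 + 3/2)) := by
    intro k hk ih
    have hp1 : (0:ℝ) < (k:ℝ)/2 + 1 := by positivity
    have hp2 : (0:ℝ) < (k:ℝ)/2 + 3/2 := by positivity
    have hΓ1 : (0:ℝ) < Real.Gamma ((k:ℝ)/2 + 1) := Real.Gamma_pos_of_pos hp1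
    have hΓ2 : (0:ℝ) < Real.Gamma ((k:ℝ)/2 + 3/2) := Real.Gamma_pos_of_pos hp2
    have e1 : ((k+2:ℕ):ℝ)/2 + 1 = ((k:ℝ)/2 + 1) + 1 := by push_cast; ring
    have e2 : ((k+2:ℕ):ℝ)/2 + 3/2 = ((k:ℝ)/2 + 3/2) + 1 := by push_cast; ring
    rw [J_step k hk, ih, e1, e2, Real.Gamma_add_one (ne_of_gt hp1),
      Real.Gamma_add_one (ne_of_gt hp2)]
    field_simp
  have main : ∀ k : ℕ,
      (J k = √π * Real.Gamma ((k:ℝ)/2 + 1) / (2 * Real.Gamma ((k:ℝ)/2 + 3/2))) ∧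
      (J (k+1) = √π * Real.Gamma (((k+1:ℕ):ℝ)/2 + 1) / (2 * Real.Gamma (((k+1:ℕ):ℝ)/2 + 3/2))) := by
    intro k
    induction k with
    | zero => exact ⟨base0, base1⟩
    | succ n ih =>
      refine ⟨ih.2, ?_⟩
      match n with
      | 0 => exact base2
      | Nat.succ m => exact step (m+1) (Nat.le_add_left 1 m) ih.1
  exact fun k => (main k).1

lemma unitBallVol_eq (k : ℕ) (hk : 1 ≤ k) :
    unitBallVol k = √π ^ k / Real.Gamma ((k:ℝ)/2 + 1) := by
  have : Nonempty (Fin k) := ⟨⟨0, hk⟩⟩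
  have hΓ : (0:ℝ) < Real.Gamma ((k:ℝ)/2 + 1) := Real.Gamma_pos_of_pos (by positivity)
  rw [unitBallVol, EuclideanSpace.volume_ball, Fintype.card_fin]
  rw [ENNReal.toReal_mul, ENNReal.toReal_pow, ENNReal.toReal_ofReal zero_le_one, one_pow,
    one_mul, ENNReal.toReal_ofReal (by positivity)]

lemma unitBallVol_pos (k : ℕ) (hk : 1 ≤ k) : 0 < unitBallVol k := by
  rw [unitBallVol_eq k hk]
  have hΓ : (0:ℝ) < Real.Gamma ((k:ℝ)/2 + 1) := Real.Gamma_pos_of_pos (by positivity)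
  have : (0:ℝ) < √π := Real.sqrt_pos.2 Real.pi_pos
  positivity

lemma Lcl_eq (k : ℕ) (hk : 1 ≤ k) :
    Lcl k = 2/((k:ℝ)+2) * unitBallVol k / (2*π)^k := by
  have hpi : (0:ℝ) < π := Real.pi_pos
  have hk0 : ((k:ℝ)) ≠ 0 := by
    have : (0:ℝ) < k := by exact_mod_cast hk
    exact ne_of_gt this
  have hk2 : ((k:ℝ)+2) ≠ 0 := by positivity
  have hω : 0 < unitBallVol k := unitBallVol_pos k hk
  have hr : 0 < unitBallVol k ^ ((2:ℝ)/k) := Real.rpow_pos_of_pos hω _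
  have h1 : (1 + 2/(k:ℝ)) * Kcl k = (4*π^2) / unitBallVol k ^ ((2:ℝ)/k) := by
    rw [Kcl]
    field_simp
  have h2 : ((4*π^2) / unitBallVol k ^ ((2:ℝ)/k)) ^ (-(k:ℝ)/2)
      = ((2*π)^k)⁻¹ / (unitBallVol k)⁻¹ := by
    rw [Real.div_rpow (by positivity) hr.le]
    congr 1
    · rw [show (4*π^2 : ℝ) = (2*π)^2 by ring, ← Real.rpow_natCast (2*π) 2,
        ← Real.rpow_mul (by positivity : (0:ℝ) ≤ 2*π),
        show ((2:ℕ):ℝ) * (-(k:ℝ)/2) = -(k:ℝ) by push_cast; ring,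
        Real.rpow_neg (by positivity : (0:ℝ) ≤ 2*π), Real.rpow_natCast]
    · rw [← Real.rpow_mul hω.le,
        show ((2:ℝ)/k) * (-(k:ℝ)/2) = -1 by field_simp,
        Real.rpow_neg_one]
  rw [Lcl, h1, h2]
  have hp : ((2*π : ℝ))^k ≠ 0 := by positivity
  field_simp
  ring

lemma Lcl_zero : Lcl 0 = 1 := by
  simp [Lcl, Kcl]

lemma Lcl_pos (k : ℕ) (hk : 1 ≤ k) : 0 < Lcl k := by
  rw [Lcl_eq k hk]
  have hpi : (0:ℝ) < π := Real.pi_pos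
  have hω := unitBallVol_pos k hk
  have hk2 : (0:ℝ) < (k:ℝ)+2 := by positivity
  positivity

lemma Lcl_succ (k : ℕ) : Lcl (k+1) = Lcl k * J (k+2) / π := by
  have hpi : (0:ℝ) < π := Real.pi_pos
  have hsq : (0:ℝ) < √π := Real.sqrt_pos.2 hpi
  rcases Nat.eq_zero_or_pos k with hk | hk
  · subst hk
    rw [Lcl_zero, Lcl_eq 1 le_rfl, unitBallVol_eq 1 le_rfl, J_closed 2]
    have h1 : Real.Gamma (((1:ℕ):ℝ)/2 + 1) = √π/2 := by
      rw [show ((1:ℕ):ℝ)/2 + 1 = 3/2 by norm_num]; exact Gamma_three_half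
    have h2 : Real.Gamma (((2:ℕ):ℝ)/2 + 1) = 1 := by norm_num [Real.Gamma_two]
    have h3 : Real.Gamma (((2:ℕ):ℝ)/2 + 3/2) = (3/4) * √π := by
      rw [show ((2:ℕ):ℝ)/2 + 3/2 = 3/2 + 1 by norm_num, Real.Gamma_add_one (by norm_num),
        Gamma_three_half]
      ring
    rw [h1, h2, h3]
    field_simp
    ring
  · have hΓ1 : (0:ℝ) < Real.Gamma ((k:ℝ)/2 + 1) := Real.Gamma_pos_of_pos (by positivity)
    have hΓ2 : (0:ℝ) < Real.Gamma (((k+1:ℕ):ℝ)/2 + 1) := Real.Gamma_pos_of_pos (by positivity)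
    rw [Lcl_eq k hk, Lcl_eq (k+1) (by omega), unitBallVol_eq k hk,
      unitBallVol_eq (k+1) (by omega), J_closed (k+2)]
    have e1 : (((k+2:ℕ)):ℝ)/2 + 1 = ((k:ℝ)/2 + 1) + 1 := by push_cast; ring
    have e2 : (((k+2:ℕ)):ℝ)/2 + 3/2 = ((((k+1:ℕ)):ℝ)/2 + 1) + 1 := by push_cast; ring
    rw [e1, e2, Real.Gamma_add_one (s := (k:ℝ)/2 + 1) (by positivity),
      Real.Gamma_add_one (s := ((k+1:ℕ):ℝ)/2 + 1) (by positivity)]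
    have hk1 : ((k+1:ℕ):ℝ) = (k:ℝ)+1 := by push_cast; ring
    have hK : (0:ℝ) < (k:ℝ) := by exact_mod_cast hk
    rw [hk1] at *
    have hB : (0:ℝ) < Real.Gamma (((k:ℝ)+1)/2 + 1) := by
      apply Real.Gamma_pos_of_pos; positivity
    rw [pow_succ, pow_succ]
    field_simp

lemma one_le_pi : (1:ℝ) ≤ π := by linarith [Real.pi_gt_three]

lemma key_sum (k : ℕ) {μ : ℝ} (hμ : 0 < μ) :
    ∑' n : ℕ, (max (μ - π^2*((n:ℝ)+1)^2) 0) ^ (1 + (k:ℝ)/2)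
      ≤ (J (k+2) / π) * μ ^ (((k:ℝ)+3)/2) := by
  have hpi : (0:ℝ) < π := Real.pi_pos
  set p : ℝ := 1 + (k:ℝ)/2 with hp
  have hp0 : 0 < p := by positivity
  set f : ℝ → ℝ := fun t => (max (μ - π^2*t^2) 0) ^ p with hf
  have hfnn : ∀ t, 0 ≤ f t := fun t => Real.rpow_nonneg (le_max_right _ _) _
  have hf_anti : AntitoneOn f (Set.Ici 0) := by
    intro s hs t ht hst
    apply Real.rpow_le_rpow (le_max_right _ _) _ hp0.le
    apply max_le_max _ le_rfl
    have h2 : s^2 ≤ t^2 := pow_le_pow_left₀ hs hst 2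
    nlinarith [sq_nonneg π, mul_le_mul_of_nonneg_left h2 (sq_nonneg π)]
  have hfcont : Continuous f := (contAux hp0.le).comp (by continuity)
  set N : ℕ := ⌈μ⌉₊ with hN
  have hμN : μ ≤ (N:ℝ) := Nat.le_ceil μ
  have hvanish : ∀ n : ℕ, N ≤ n → f ((n:ℝ)+1) = 0 := by
    intro n hn
    have h1 : μ ≤ (n:ℝ)+1 := by
      have : (N:ℝ) ≤ (n:ℝ) := by exact_mod_cast hn
      linarith
    have hπ2 : (1:ℝ) ≤ π^2 := by nlinarith [one_le_pi]
    have h3 : ((n:ℝ)+1) ≤ ((n:ℝ)+1)^2 := by nlinarith [show (0:ℝ) ≤ (n:ℝ) from Nat.cast_nonneg n]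
    have h4 : ((n:ℝ)+1)^2 ≤ π^2*((n:ℝ)+1)^2 := by
      nlinarith [mul_nonneg (sub_nonneg.mpr hπ2) (sq_nonneg ((n:ℝ)+1))]
    have h2 : μ - π^2*((n:ℝ)+1)^2 ≤ 0 := by linarith
    rw [hf]
    beta_reduce
    rw [max_eq_right h2, Real.zero_rpow (ne_of_gt hp0)]
  -- tsum equals finite sum
  have htsum : ∑' n : ℕ, (max (μ - π^2*((n:ℝ)+1)^2) 0) ^ p
      = ∑ n ∈ Finset.range N, f ((n:ℝ)+1) :=
    tsum_eq_sum (fun n hn => hvanish n (Nat.le_of_not_lt (fun h => hn (Finset.mem_range.mpr h))))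
  -- compare to integral
  have hcomp : ∑ n ∈ Finset.range N, f ((n:ℝ)+1) ≤ ∫ x in (0:ℝ)..(0 + (N:ℝ)), f x := by
    have hanti : AntitoneOn f (Set.Icc 0 (0 + (N:ℝ))) :=
      hf_anti.mono (fun x hx => hx.1)
    have := hanti.sum_le_integral
    refine le_trans (le_of_eq ?_) this
    apply Finset.sum_congr rfl
    intro i _
    push_cast
    norm_num
  -- evaluate the integral
  set t₀ : ℝ := Real.sqrt μ / π with ht₀
  have ht₀pos : 0 < t₀ := div_pos (Real.sqrt_pos.2 hμ) hpi
  have ht₀sq : π^2 * t₀^2 = μ := by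
    rw [ht₀, div_pow, Real.sq_sqrt hμ.le]
    field_simp
  have ht₀N : t₀ ≤ (N:ℝ) := by
    have h1 : Real.sqrt μ ≤ (N:ℝ) := by
      rcases le_total μ 1 with h | h
      · have : Real.sqrt μ ≤ 1 := by
          rw [show (1:ℝ) = Real.sqrt 1 by simp]
          exact Real.sqrt_le_sqrt h
        have hN1 : 1 ≤ (N:ℝ) := by
          have : 0 < N := Nat.ceil_pos.2 hμ
          exact_mod_cast this
        linarith
      · have h2 : Real.sqrt μ ≤ μ := by
          nlinarith [Real.sq_sqrt hμ.le, Real.sqrt_nonneg μ, Real.sqrt_le_sqrt h,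
            Real.sqrt_one]
        linarith
    calc t₀ ≤ Real.sqrt μ := by
          rw [ht₀]
          apply div_le_self (Real.sqrt_nonneg μ) one_le_pi
      _ ≤ (N:ℝ) := h1
  have hsplit : ∫ x in (0:ℝ)..(N:ℝ), f x
      = (∫ x in (0:ℝ)..t₀, f x) + ∫ x in t₀..(N:ℝ), f x :=
    (intervalIntegral.integral_add_adjacent_intervals (μ := volume)
      (hfcont.intervalIntegrable _ _) (hfcont.intervalIntegrable _ _)).symm
  have hzero : ∫ x in t₀..(N:ℝ), f x = 0 := by
    have : ∀ x ∈ Set.uIcc t₀ (N:ℝ), f x = 0 := by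
      intro x hx
      rw [Set.uIcc_of_le ht₀N] at hx
      have hx0 : t₀ ≤ x := hx.1
      have hx2 : t₀^2 ≤ x^2 := pow_le_pow_left₀ ht₀pos.le hx0 2
      have hm : π^2*t₀^2 ≤ π^2*x^2 := mul_le_mul_of_nonneg_left hx2 (sq_nonneg π)
      rw [ht₀sq] at hm
      have : μ - π^2*x^2 ≤ 0 := by linarith
      rw [hf]
      beta_reduce
      rw [max_eq_right this, Real.zero_rpow (ne_of_gt hp0)]
    rw [intervalIntegral.integral_congr this]
    simp
  have hsub : ∫ x in (0:ℝ)..t₀, f x = t₀ * ∫ s in (0:ℝ)..1, f (t₀ * s) := by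
    have := intervalIntegral.smul_integral_comp_mul_left (f := f) (a := (0:ℝ)) (b := 1) t₀
    rw [mul_zero, mul_one] at this
    rw [← this]
    simp
  have hval : ∫ s in (0:ℝ)..1, f (t₀ * s) = μ ^ p * J (k+2) := by
    have hcongr : ∀ s ∈ Set.uIcc (0:ℝ) 1, f (t₀ * s)
        = μ ^ p * (max (1 - s^2) 0) ^ p := by
      intro s _
      rw [hf]
      beta_reduce
      have e1 : μ - π^2*(t₀*s)^2 = μ * (1 - s^2) := by
        have : π^2*(t₀*s)^2 = (π^2*t₀^2) * s^2 := by ring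
        rw [this, ht₀sq]
        ring
      rw [e1, show (0:ℝ) = μ * 0 by ring, ← mul_max_of_nonneg _ _ hμ.le,
        Real.mul_rpow hμ.le (le_max_right _ _)]
      norm_num
    rw [intervalIntegral.integral_congr hcongr, intervalIntegral.integral_const_mul]
    congr 1
    rw [J]
    apply intervalIntegral.integral_congr
    intro s _
    have : ((k+2:ℕ):ℝ)/2 = p := by rw [hp]; push_cast; ring
    rw [this]
  have hJnn : 0 ≤ ∫ s in (0:ℝ)..1, f (t₀ * s) := by
    apply intervalIntegral.integral_nonneg zero_le_one
    intro x _
    exact hfnn _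
  -- put it together
  have hfinal : t₀ * (μ ^ p * J (k+2)) = (J (k+2) / π) * μ ^ (((k:ℝ)+3)/2) := by
    rw [ht₀, Real.sqrt_eq_rpow]
    have e : μ ^ (((k:ℝ)+3)/2) = μ ^ ((1:ℝ)/2) * μ ^ p := by
      rw [← Real.rpow_add hμ]
      congr 1
      rw [hp]; ring
    rw [e]
    field_simp
  calc ∑' n : ℕ, (max (μ - π^2*((n:ℝ)+1)^2) 0) ^ p
      = ∑ n ∈ Finset.range N, f ((n:ℝ)+1) := htsum
    _ ≤ ∫ x in (0:ℝ)..(0 + (N:ℝ)), f x := hcomp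
    _ = (∫ x in (0:ℝ)..t₀, f x) + ∫ x in t₀..(N:ℝ), f x := by rw [zero_add]; exact hsplit
    _ = t₀ * (μ ^ p * J (k+2)) := by rw [hzero, add_zero, hsub, hval]
    _ = (J (k+2) / π) * μ ^ (((k:ℝ)+3)/2) := hfinal

lemma J_pos (k : ℕ) : 0 < J k := by
  rw [J_closed]
  have h1 : (0:ℝ) < Real.Gamma ((k:ℝ)/2 + 1) := Real.Gamma_pos_of_pos (by positivity)
  have h2 : (0:ℝ) < Real.Gamma ((k:ℝ)/2 + 3/2) := Real.Gamma_pos_of_pos (by positivity)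
  have h3 : (0:ℝ) < √π := Real.sqrt_pos.2 Real.pi_pos
  positivity

lemma vanish (μ : ℝ) : ∀ n : ℕ, ⌈μ⌉₊ ≤ n → μ - π^2*((n:ℝ)+1)^2 ≤ 0 := by
  intro n hn
  have h1 : μ ≤ (n:ℝ)+1 := by
    have : (⌈μ⌉₊:ℝ) ≤ (n:ℝ) := by exact_mod_cast hn
    linarith [Nat.le_ceil μ]
  have hπ2 : (1:ℝ) ≤ π^2 := by nlinarith [one_le_pi]
  have h3 : ((n:ℝ)+1) ≤ ((n:ℝ)+1)^2 := by
    nlinarith [show (0:ℝ) ≤ (n:ℝ) from Nat.cast_nonneg n]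
  have h4 : ((n:ℝ)+1)^2 ≤ π^2*((n:ℝ)+1)^2 := by
    nlinarith [mul_nonneg (sub_nonneg.mpr hπ2) (sq_nonneg ((n:ℝ)+1))]
  linarith

lemma summable_phi (μ : ℝ) {p : ℝ} (hp : 0 < p) :
    Summable (fun n : ℕ => (max (μ - π^2*((n:ℝ)+1)^2) 0) ^ p) := by
  apply summable_of_finite_support
  apply Set.Finite.subset (Set.finite_Iio ⌈μ⌉₊)
  intro n hn
  by_contra hmem
  simp only [Set.mem_Iio, not_lt] at hmem
  apply hn
  simp only [Function.mem_support, ne_eq, not_not]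
  rw [max_eq_right (vanish μ n hmem), Real.zero_rpow (ne_of_gt hp)]

lemma support_finite (d : ℕ) (ν : ℝ) :
    (Function.support fun p : Fin d → ℕ =>
      min (π^2 * ∑ i, ((p i : ℝ))^2 - ν) 0).Finite := by
  set M : ℕ := ⌈ν⌉₊ + 1 with hM
  apply Set.Finite.subset (Set.Finite.pi (fun i : Fin d => Set.finite_Iio M))
  intro p hp
  have hne : min (π^2 * ∑ i, ((p i : ℝ))^2 - ν) 0 ≠ 0 := hp
  have hlt : π^2 * ∑ i, ((p i : ℝ))^2 - ν < 0 := by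
    by_contra h
    push_neg at h
    exact hne (min_eq_right h)
  have hπ2 : (1:ℝ) ≤ π^2 := by nlinarith [one_le_pi]
  have hsum_nn : (0:ℝ) ≤ ∑ i, ((p i : ℝ))^2 :=
    Finset.sum_nonneg (fun i _ => sq_nonneg _)
  have hsumν : ∑ i, ((p i : ℝ))^2 < ν := by nlinarith
  intro i _
  simp only [Set.mem_Iio]
  have hterm : ((p i : ℝ))^2 ≤ ∑ j, ((p j : ℝ))^2 :=
    Finset.single_le_sum (fun j _ => sq_nonneg (((p j : ℕ)):ℝ)) (Finset.mem_univ i)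
  have hle : ((p i : ℝ)) ≤ ((p i : ℝ))^2 := by
    have h := Nat.le_self_pow (by norm_num : (2:ℕ) ≠ 0) (p i)
    exact_mod_cast h
  have : ((p i : ℝ)) < (M:ℝ) := by
    have : (ν:ℝ) ≤ (⌈ν⌉₊:ℝ) := Nat.le_ceil ν
    push_cast [hM]
    linarith
  exact_mod_cast this

lemma summable_term (d : ℕ) (ν : ℝ) :
    Summable (fun p : Fin d → ℕ => min (π^2 * ∑ i, ((p i : ℝ))^2 - ν) 0) :=
  summable_of_finite_support (support_finite d ν)

lemma S_eq_zero (d : ℕ) {ν : ℝ} (hν : ν ≤ 0) :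
    (∑' p : Fin d → ℕ, min (π^2 * ∑ i, ((p i : ℝ))^2 - ν) 0) = 0 := by
  have h : ∀ p : Fin d → ℕ, min (π^2 * ∑ i, ((p i : ℝ))^2 - ν) 0 = 0 := by
    intro p
    apply min_eq_right
    have : (0:ℝ) ≤ ∑ i, ((p i : ℝ))^2 := Finset.sum_nonneg (fun i _ => sq_nonneg _)
    nlinarith [sq_nonneg π]
  calc ∑' p : Fin d → ℕ, min (π^2 * ∑ i, ((p i : ℝ))^2 - ν) 0
      = ∑' p : Fin d → ℕ, (0:ℝ) := tsum_congr h
    _ = 0 := tsum_zero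

lemma outer_summable (d : ℕ) (μ : ℝ) :
    Summable (fun n : ℕ => ∑' q : Fin d → ℕ,
      min (π^2 * ∑ i, ((q i : ℝ))^2 - (μ - π^2*((n:ℝ)+1)^2)) 0) := by
  apply summable_of_finite_support
  apply Set.Finite.subset (Set.finite_Iio ⌈μ⌉₊)
  intro n hn
  by_contra hmem
  simp only [Set.mem_Iio, not_lt] at hmem
  exact hn (by simpa using S_eq_zero d (vanish μ n hmem))

lemma S_succ (d : ℕ) (ν : ℝ) :
    (∑' p : Fin (d+1) → ℕ, min (π^2 * ∑ i, ((p i : ℝ))^2 - ν) 0)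
      = (∑' q : Fin d → ℕ, min (π^2 * ∑ i, ((q i : ℝ))^2 - ν) 0)
        + ∑' n : ℕ, ∑' q : Fin d → ℕ,
            min (π^2 * ∑ i, ((q i : ℝ))^2 - (ν - π^2*((n:ℝ)+1)^2)) 0 := by
  set F : (Fin (d+1) → ℕ) → ℝ := fun p => min (π^2 * ∑ i, ((p i : ℝ))^2 - ν) 0 with hF
  set e : (ℕ × (Fin d → ℕ)) ≃ (Fin (d+1) → ℕ) :=
    Fin.consEquiv (fun _ : Fin (d+1) => ℕ) with he
  have hterm : ∀ a : ℕ, ∀ q : Fin d → ℕ,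
      F (e (a, q)) = min (π^2 * ∑ i, ((q i : ℝ))^2 - (ν - π^2*(a:ℝ)^2)) 0 := by
    intro a q
    have hsum : ∑ i, (((e (a, q)) i : ℝ))^2 = (a:ℝ)^2 + ∑ i, ((q i : ℝ))^2 := by
      have : (fun i => (((e (a, q)) i : ℝ))^2)
          = fun i : Fin (d+1) => (((Fin.cons a q : ∀ _ : Fin (d+1), ℕ) i : ℝ))^2 := rfl
      rw [Fin.sum_univ_succ]
      simp [he, Fin.consEquiv]
    rw [hF]
    beta_reduce
    rw [hsum]
    congr 1
    ring
  have hsummable : Summable (fun x : ℕ × (Fin d → ℕ) => F (e x)) :=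
    e.summable_iff.2 (summable_term (d+1) ν)
  have hinner : ∀ a : ℕ, Summable (fun q : Fin d → ℕ => F (e (a, q))) := by
    intro a
    apply Summable.congr (summable_term d (ν - π^2*(a:ℝ)^2))
    intro q
    rw [hterm a q]
  rw [← e.tsum_eq F, Summable.tsum_prod' hsummable hinner]
  have houter : (fun a : ℕ => ∑' q : Fin d → ℕ, F (e (a, q)))
      = fun a : ℕ => ∑' q : Fin d → ℕ,
          min (π^2 * ∑ i, ((q i : ℝ))^2 - (ν - π^2*(a:ℝ)^2)) 0 := by
    funext a
    exact tsum_congr (fun q => hterm a q)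
  rw [houter]
  have hsummable_outer : Summable (fun a : ℕ => ∑' q : Fin d → ℕ,
      min (π^2 * ∑ i, ((q i : ℝ))^2 - (ν - π^2*(a:ℝ)^2)) 0) := by
    apply summable_of_finite_support
    apply Set.Finite.subset (Set.finite_Iio (⌈ν⌉₊+1))
    intro a ha
    by_contra hmem
    simp only [Set.mem_Iio, not_lt] at hmem
    apply ha
    have h1 : ν - π^2*(a:ℝ)^2 ≤ 0 := by
      have ha1 : (1:ℝ) ≤ (a:ℝ) := by
        have : 1 ≤ a := le_trans (Nat.le_add_left 1 ⌈ν⌉₊) hmem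
        exact_mod_cast this
      have hν : ν ≤ (⌈ν⌉₊:ℝ) := Nat.le_ceil ν
      have ha2 : (⌈ν⌉₊:ℝ) + 1 ≤ (a:ℝ) := by exact_mod_cast hmem
      have hπ2 : (1:ℝ) ≤ π^2 := by nlinarith [one_le_pi]
      nlinarith
    simpa using S_eq_zero d h1
  rw [Summable.tsum_eq_zero_add hsummable_outer]
  congr 1
  · norm_num
  · apply tsum_congr
    intro n
    apply tsum_congr
    intro q
    congr 3
    push_cast
    ring

lemma min_zero_eq_neg_max (x : ℝ) : min x 0 = -max (-x) 0 := by
  rcases le_total x 0 with h | h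
  · rw [min_eq_left h, max_eq_left (neg_nonneg.2 h), neg_neg]
  · rw [min_eq_right h, max_eq_right (neg_nonpos.2 h), neg_zero]

/-- Lower bound on the Neumann eigenvalue sum on the unit cube: semiclassical main term
plus lower-order error terms. -/
theorem neumann_sum_lower_bound (d : ℕ) (hd : 1 ≤ d) :
    ∃ C : ℝ, 0 < C ∧ ∀ μ : ℝ, 0 < μ →
      -(Lcl d) * μ ^ (1 + (d : ℝ) / 2) - C * ∑ k ∈ Finset.range d, μ ^ (1 + (k : ℝ) / 2) ≤
        ∑' p : Fin d → ℕ, min (Real.pi ^ 2 * ∑ i, ((p i : ℝ)) ^ 2 - μ) 0 := by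
  induction d, hd using Nat.le_induction with
  | base =>
    refine ⟨1, one_pos, fun μ hμ => ?_⟩
    -- rewrite the sum over `Fin 1 → ℕ` as a sum over `ℕ`
    set F : (Fin 1 → ℕ) → ℝ := fun p => min (π^2 * ∑ i, ((p i : ℝ))^2 - μ) 0 with hF
    set e : (Fin 1 → ℕ) ≃ ℕ := Equiv.funUnique (Fin 1) ℕ with he
    set g : ℕ → ℝ := fun n => min (π^2 * (n:ℝ)^2 - μ) 0 with hg
    have hge : ∀ n : ℕ, F (e.symm n) = g n := by
      intro n
      rw [hF, hg]
      beta_reduce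
      congr 2
      simp [he]
    have hSeq : (∑' p : Fin 1 → ℕ, F p) = ∑' n : ℕ, g n := by
      rw [← e.symm.tsum_eq F]
      exact tsum_congr hge
    have hg_summable : Summable g := by
      apply Summable.congr (e.symm.summable_iff.2 (summable_term 1 μ))
      exact hge
    have hzero_add : ∑' n : ℕ, g n = g 0 + ∑' n : ℕ, g (n+1) :=
      Summable.tsum_eq_zero_add hg_summable
    have hg0 : g 0 = -μ := by
      have h0 : π ^ 2 * ((0:ℕ):ℝ) ^ 2 - μ = -μ := by push_cast; ring
      show min (π^2 * ((0:ℕ):ℝ)^2 - μ) 0 = -μ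
      rw [h0]
      exact min_eq_left (by linarith)
    have htail : ∑' n : ℕ, g (n+1)
        = -∑' n : ℕ, (max (μ - π^2*((n:ℝ)+1)^2) 0) ^ (1 + ((0:ℕ):ℝ)/2) := by
      rw [← tsum_neg]
      apply tsum_congr
      intro n
      rw [hg]
      beta_reduce
      rw [show (((n+1:ℕ)):ℝ) = (n:ℝ)+1 by push_cast; ring]
      rw [min_zero_eq_neg_max, show (1 + ((0:ℕ):ℝ)/2) = 1 by norm_num, Real.rpow_one]
      congr 2
      ring
    have hkey := key_sum 0 hμ
    have hLcl1 : Lcl 1 = J 2 / π := by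
      rw [Lcl_succ 0, Lcl_zero, one_mul]
    have hexp : μ ^ ((((0:ℕ)):ℝ)+3)/2 = 0 ∨ True := Or.inr trivial
    have hgoal : -(Lcl 1) * μ ^ (1 + ((1:ℕ) : ℝ)/2)
        ≤ -μ + ∑' n : ℕ, g (n+1) + μ := by
      rw [htail]
      have : (((0:ℕ):ℝ)+3)/2 = 1 + ((1:ℕ):ℝ)/2 := by push_cast; ring
      rw [hLcl1]
      have h2 := neg_le_neg hkey
      rw [this] at h2
      linarith
    have hsum1 : ∑ k ∈ Finset.range 1, μ ^ (1 + (k : ℝ)/2) = μ := by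
      rw [Finset.sum_range_one]
      norm_num
    calc -(Lcl 1) * μ ^ (1 + ((1:ℕ) : ℝ) / 2) - 1 * ∑ k ∈ Finset.range 1, μ ^ (1 + (k : ℝ) / 2)
        = -(Lcl 1) * μ ^ (1 + ((1:ℕ) : ℝ)/2) - μ := by rw [hsum1, one_mul]
      _ ≤ -μ + ∑' n : ℕ, g (n+1) := by linarith [hgoal]
      _ = g 0 + ∑' n : ℕ, g (n+1) := by rw [hg0]
      _ = ∑' n : ℕ, g n := hzero_add.symm
      _ = ∑' p : Fin 1 → ℕ, F p := hSeq.symm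
  | succ d hd ih =>
    obtain ⟨C, hC, hIH⟩ := ih
    have hLd : 0 < Lcl d := Lcl_pos d hd
    have hpi : (0:ℝ) < π := Real.pi_pos
    have hJsum : 0 ≤ ∑ k ∈ Finset.range d, J (k+2) / π :=
      Finset.sum_nonneg (fun k _ => div_nonneg (J_pos (k+2)).le hpi.le)
    refine ⟨Lcl d + C + C * (∑ k ∈ Finset.range d, J (k+2) / π), by positivity, fun μ hμ => ?_⟩
    set g : ℕ → ℝ := fun n => Lcl d * (max (μ - π^2*((n:ℝ)+1)^2) 0) ^ (1 + (d:ℝ)/2)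
      + ∑ k ∈ Finset.range d, C * (max (μ - π^2*((n:ℝ)+1)^2) 0) ^ (1 + (k:ℝ)/2) with hgdef
    have hgn : ∀ n : ℕ, -g n ≤ ∑' q : Fin d → ℕ,
        min (π^2 * ∑ i, ((q i : ℝ))^2 - (μ - π^2*((n:ℝ)+1)^2)) 0 := by
      intro n
      by_cases hpos : 0 < μ - π^2*((n:ℝ)+1)^2
      · have e1 : g n = Lcl d * (μ - π^2*((n:ℝ)+1)^2) ^ (1 + (d:ℝ)/2)
            + C * ∑ k ∈ Finset.range d, (μ - π^2*((n:ℝ)+1)^2) ^ (1 + (k:ℝ)/2) := by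
          rw [hgdef]
          beta_reduce
          rw [max_eq_left hpos.le, Finset.mul_sum]
        have h2 := hIH (μ - π^2*((n:ℝ)+1)^2) hpos
        rw [e1]
        linarith
      · push_neg at hpos
        rw [S_eq_zero d hpos]
        have hmax : max (μ - π^2*((n:ℝ)+1)^2) 0 = 0 := max_eq_right hpos
        have hg0 : g n = 0 := by
          rw [hgdef]
          beta_reduce
          rw [hmax, Real.zero_rpow (by positivity : (1 + (d:ℝ)/2) ≠ 0), mul_zero, zero_add]
          apply Finset.sum_eq_zero
          intro k _
          rw [Real.zero_rpow (by positivity : (1 + (k:ℝ)/2) ≠ 0), mul_zero]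
        rw [hg0, neg_zero]
    have hpd : (0:ℝ) < 1 + (d:ℝ)/2 := by positivity
    have hφd : Summable (fun n : ℕ => (max (μ - π^2*((n:ℝ)+1)^2) 0) ^ (1 + (d:ℝ)/2)) :=
      summable_phi μ hpd
    have hφk : ∀ k : ℕ, Summable (fun n : ℕ =>
        (max (μ - π^2*((n:ℝ)+1)^2) 0) ^ (1 + (k:ℝ)/2)) :=
      fun k => summable_phi μ (by positivity)
    have hsum_g : Summable g := by
      apply Summable.add (hφd.mul_left (Lcl d))
      exact summable_sum (fun k _ => (hφk k).mul_left C)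
    have hsum_S : Summable (fun n : ℕ => ∑' q : Fin d → ℕ,
        min (π^2 * ∑ i, ((q i : ℝ))^2 - (μ - π^2*((n:ℝ)+1)^2)) 0) := outer_summable d μ
    have hB : -∑' n : ℕ, g n ≤ ∑' n : ℕ, ∑' q : Fin d → ℕ,
        min (π^2 * ∑ i, ((q i : ℝ))^2 - (μ - π^2*((n:ℝ)+1)^2)) 0 := by
      rw [← tsum_neg]
      exact Summable.tsum_le_tsum hgn hsum_g.neg hsum_S
    have hgval : ∑' n : ℕ, g n
        = Lcl d * (∑' n : ℕ, (max (μ - π^2*((n:ℝ)+1)^2) 0) ^ (1 + (d:ℝ)/2))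
          + ∑ k ∈ Finset.range d, C * ∑' n : ℕ,
              (max (μ - π^2*((n:ℝ)+1)^2) 0) ^ (1 + (k:ℝ)/2) := by
      rw [hgdef]
      rw [Summable.tsum_add (hφd.mul_left _) (summable_sum (fun k _ => (hφk k).mul_left C)),
        tsum_mul_left, Summable.tsum_finsetSum (fun k _ => (hφk k).mul_left C)]
      congr 1
      exact Finset.sum_congr rfl (fun k _ => tsum_mul_left)
    have hT : ∑' n : ℕ, g n
        ≤ Lcl d * ((J (d+2)/π) * μ^(((d:ℝ)+3)/2))
          + ∑ k ∈ Finset.range d, C * ((J (k+2)/π) * μ^(((k:ℝ)+3)/2)) := by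
      rw [hgval]
      exact add_le_add (mul_le_mul_of_nonneg_left (key_sum d hμ) hLd.le)
        (Finset.sum_le_sum (fun k _ => mul_le_mul_of_nonneg_left (key_sum k hμ) hC.le))
    have hdecomp := S_succ d μ
    have h1 : Lcl d * μ^(1+(d:ℝ)/2)
        ≤ Lcl d * ∑ k ∈ Finset.range (d+1), μ^(1+(k:ℝ)/2) :=
      mul_le_mul_of_nonneg_left
        (Finset.single_le_sum (f := fun k : ℕ => μ^(1+(k:ℝ)/2))
          (fun k _ => (Real.rpow_pos_of_pos hμ _).le) (Finset.self_mem_range_succ d)) hLd.le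
    have h2 : C * (∑ k ∈ Finset.range d, μ^(1+(k:ℝ)/2))
        ≤ C * ∑ k ∈ Finset.range (d+1), μ^(1+(k:ℝ)/2) :=
      mul_le_mul_of_nonneg_left
        (Finset.sum_le_sum_of_subset_of_nonneg (Finset.range_subset_range.mpr (Nat.le_succ d))
          (fun k _ _ => (Real.rpow_pos_of_pos hμ _).le)) hC.le
    have h3 : ∑ k ∈ Finset.range d, C * ((J (k+2)/π) * μ^(((k:ℝ)+3)/2))
        ≤ (∑ k ∈ Finset.range d, C * (J (k+2)/π))
            * ∑ k ∈ Finset.range (d+1), μ^(1+(k:ℝ)/2) := by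
      rw [Finset.sum_mul]
      apply Finset.sum_le_sum
      intro k hk
      have hμe : μ^(((k:ℝ)+3)/2) = μ^(1+((k+1:ℕ):ℝ)/2) := by
        congr 1
        push_cast
        ring
      have hmem : k+1 ∈ Finset.range (d+1) :=
        Finset.mem_range.mpr (by have := Finset.mem_range.mp hk; omega)
      have hsingle : μ^(1+((k+1:ℕ):ℝ)/2) ≤ ∑ k ∈ Finset.range (d+1), μ^(1+(k:ℝ)/2) :=
        Finset.single_le_sum (f := fun k : ℕ => μ^(1+(k:ℝ)/2))
          (fun j _ => (Real.rpow_pos_of_pos hμ _).le) hmem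
      have hcoef : 0 ≤ C * (J (k+2)/π) :=
        mul_nonneg hC.le (div_nonneg (J_pos (k+2)).le hpi.le)
      calc C * ((J (k+2)/π) * μ^(((k:ℝ)+3)/2))
          = (C * (J (k+2)/π)) * μ^(1+((k+1:ℕ):ℝ)/2) := by rw [hμe]; ring
        _ ≤ (C * (J (k+2)/π)) * ∑ k ∈ Finset.range (d+1), μ^(1+(k:ℝ)/2) :=
            mul_le_mul_of_nonneg_left hsingle hcoef
    have hLs : Lcl d * ((J (d+2)/π) * μ^(((d:ℝ)+3)/2))
        = Lcl (d+1) * μ^(1+((d+1:ℕ):ℝ)/2) := by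
      rw [Lcl_succ d]
      have : μ^(((d:ℝ)+3)/2) = μ^(1+((d+1:ℕ):ℝ)/2) := by
        congr 1
        push_cast
        ring
      rw [this]
      ring
    have hC'B : (Lcl d + C + C * (∑ k ∈ Finset.range d, J (k+2)/π))
          * ∑ k ∈ Finset.range (d+1), μ^(1+(k:ℝ)/2)
        = Lcl d * (∑ k ∈ Finset.range (d+1), μ^(1+(k:ℝ)/2))
          + C * (∑ k ∈ Finset.range (d+1), μ^(1+(k:ℝ)/2))
          + (∑ k ∈ Finset.range d, C * (J (k+2)/π))
              * ∑ k ∈ Finset.range (d+1), μ^(1+(k:ℝ)/2) := by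
      have e : C * (∑ k ∈ Finset.range d, J (k+2)/π)
          = ∑ k ∈ Finset.range d, C * (J (k+2)/π) := by
        rw [Finset.mul_sum]
      rw [e]
      ring
    rw [hdecomp]
    have hIHμ := hIH μ hμ
    linarith [hB, hT, h1, h2, h3, hLs, hC'B, hIHμ]
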